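/- arXiv:1010.3366 — 4 statements merged into one kernel-verified Lean document; each statement's English description precedes it below -/
import Mathlib

section
/- Let S : [0,1] → ℝ be continuously differentiable with |Ṡ|₁ = ∫₀¹ |S'(t)| dt < ∞, and let θ_j = ∫₀¹ S(t) φ_j(t) dt be its Fourier coefficients with respect to the trigonometric basis φ₁ = 1, φ_j(x) = √2·cos(2π[j/2]x) for even j and φ_j(x) = √2·sin(2π[j/2]x) for odd j ≥ 3. Then for every l ≥ 2, l·∑_{j≥l} θ_j² ≤ 4·|Ṡ|₁². -/
open MeasureTheory Real

/-- The trigonometric basis of L²[0,1]: φ₁ = 1, φ_j(x) = √2·cos(2π[j/2]x) for even j,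
φ_j(x) = √2·sin(2π[j/2]x) for odd j ≥ 3. -/
noncomputable def phi (j : ℕ) : ℝ → ℝ := fun x =>
  if j = 1 then 1
  else if Even j then Real.sqrt 2 * Real.cos (2 * Real.pi * ((j / 2 : ℕ) : ℝ) * x)
  else Real.sqrt 2 * Real.sin (2 * Real.pi * ((j / 2 : ℕ) : ℝ) * x)

lemma deriv_trig_int_bound (S : ℝ → ℝ) (hS : ContDiff ℝ 1 S) (g : ℝ → ℝ)
    (hg : Continuous g) (hg1 : ∀ t, |g t| ≤ 1) :
    |∫ t in (0:ℝ)..1, deriv S t * g t| ≤ ∫ t in (0:ℝ)..1, |deriv S t| := by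
  have hc : Continuous (deriv S) := hS.continuous_deriv le_rfl
  calc |∫ t in (0:ℝ)..1, deriv S t * g t|
      ≤ ∫ t in (0:ℝ)..1, |deriv S t * g t| :=
        intervalIntegral.abs_integral_le_integral_abs zero_le_one
    _ ≤ ∫ t in (0:ℝ)..1, |deriv S t| := by
        apply intervalIntegral.integral_mono_on zero_le_one
        · exact ((hc.mul hg).abs).intervalIntegrable _ _
        · exact (hc.abs).intervalIntegrable _ _
        · intro x _
          rw [abs_mul]
          exact mul_le_of_le_one_right (abs_nonneg _) (hg1 x)

lemma ibp_cos (S : ℝ → ℝ) (hS : ContDiff ℝ 1 S) (k : ℕ) (hk : 1 ≤ k) :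
    |∫ t in (0:ℝ)..1, S t * Real.cos (2 * Real.pi * k * t)|
      ≤ (∫ t in (0:ℝ)..1, |deriv S t|) / (2 * Real.pi * k) := by
  set c : ℝ := 2 * Real.pi * k with hc
  have hcpos : 0 < c := by
    have := Real.pi_pos
    have : (1:ℝ) ≤ (k:ℝ) := by exact_mod_cast hk
    positivity
  have hS' : Continuous (deriv S) := hS.continuous_deriv le_rfl
  have hu : ∀ x ∈ Set.uIcc (0:ℝ) 1, HasDerivAt S (deriv S x) x := fun x _ =>
    ((hS.differentiable one_ne_zero) x).hasDerivAt
  have hv : ∀ x ∈ Set.uIcc (0:ℝ) 1,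
      HasDerivAt (fun t => Real.sin (c * t) / c) (Real.cos (c * x)) x := by
    intro x _
    have h1 : HasDerivAt (fun t : ℝ => c * t) c x := by
      simpa using (hasDerivAt_id x).const_mul c
    have h2 := (Real.hasDerivAt_sin (c * x)).comp x h1
    have h3 := h2.div_const c
    simpa [mul_div_assoc, mul_div_cancel_left₀, hcpos.ne'] using h3
  have key := intervalIntegral.integral_mul_deriv_eq_deriv_mul hu hv
    (hS'.intervalIntegrable _ _)
    ((Real.continuous_cos.comp (continuous_const.mul continuous_id)).intervalIntegrable _ _)
  have hsin1 : Real.sin (c * 1) = 0 := by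
    have : c * 1 = (2 * k : ℕ) * Real.pi := by push_cast [hc]; ring
    rw [this, Real.sin_nat_mul_pi]
  have hsin0 : Real.sin (c * 0) = 0 := by simp
  rw [key, hsin1, hsin0]
  have hrw : ∫ t in (0:ℝ)..1, deriv S t * (Real.sin (c * t) / c)
      = (∫ t in (0:ℝ)..1, deriv S t * Real.sin (c * t)) / c := by
    rw [← intervalIntegral.integral_div]
    congr 1; ext t; ring
  rw [hrw]
  simp only [zero_div, mul_zero, zero_sub, zero_mul, sub_zero, abs_neg, abs_div,
    abs_of_pos hcpos]
  gcongr
  exact deriv_trig_int_bound S hS _ (Real.continuous_sin.comp (continuous_const.mul continuous_id))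
    (fun t => Real.abs_sin_le_one _)

lemma ibp_sin (S : ℝ → ℝ) (hS : ContDiff ℝ 1 S) (hper : S 0 = S 1) (k : ℕ) (hk : 1 ≤ k) :
    |∫ t in (0:ℝ)..1, S t * Real.sin (2 * Real.pi * k * t)|
      ≤ (∫ t in (0:ℝ)..1, |deriv S t|) / (2 * Real.pi * k) := by
  set c : ℝ := 2 * Real.pi * k with hc
  have hcpos : 0 < c := by
    have := Real.pi_pos
    have : (1:ℝ) ≤ (k:ℝ) := by exact_mod_cast hk
    positivity
  have hS' : Continuous (deriv S) := hS.continuous_deriv le_rfl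
  have hu : ∀ x ∈ Set.uIcc (0:ℝ) 1, HasDerivAt S (deriv S x) x := fun x _ =>
    ((hS.differentiable one_ne_zero) x).hasDerivAt
  have hv : ∀ x ∈ Set.uIcc (0:ℝ) 1,
      HasDerivAt (fun t => -(Real.cos (c * t)) / c) (Real.sin (c * x)) x := by
    intro x _
    have h1 : HasDerivAt (fun t : ℝ => c * t) c x := by
      simpa using (hasDerivAt_id x).const_mul c
    have h2 := ((Real.hasDerivAt_cos (c * x)).comp x h1).neg
    have h3 := h2.div_const c
    simpa [mul_div_assoc, mul_div_cancel_left₀, hcpos.ne'] using h3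
  have key := intervalIntegral.integral_mul_deriv_eq_deriv_mul hu hv
    (hS'.intervalIntegrable _ _)
    ((Real.continuous_sin.comp (continuous_const.mul continuous_id)).intervalIntegrable _ _)
  have hcos1 : Real.cos (c * 1) = 1 := by
    have : c * 1 = (k : ℝ) * (2 * Real.pi) := by rw [hc]; ring
    rw [this]; exact_mod_cast Real.cos_nat_mul_two_pi k
  have hcos0 : Real.cos (c * 0) = 1 := by simp
  rw [key, hcos1, hcos0]
  have hbd : S 1 * (-1 / c) - S 0 * (-1 / c) = 0 := by rw [hper]; ring
  rw [hbd, zero_sub, abs_neg]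
  have hrw : ∫ t in (0:ℝ)..1, deriv S t * (-(Real.cos (c * t)) / c)
      = (∫ t in (0:ℝ)..1, deriv S t * (-(Real.cos (c * t)))) / c := by
    rw [← intervalIntegral.integral_div]
    congr 1; ext t; ring
  rw [hrw, abs_div, abs_of_pos hcpos]
  gcongr
  exact deriv_trig_int_bound S hS _ ((Real.continuous_cos.comp
    (continuous_const.mul continuous_id)).neg)
    (fun t => by rw [abs_neg]; exact Real.abs_cos_le_one _)

lemma theta_abs_bound (S : ℝ → ℝ) (hS : ContDiff ℝ 1 S) (hper : S 0 = S 1)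
    (j : ℕ) (hj : 2 ≤ j) :
    |∫ t in (0:ℝ)..1, S t * phi j t|
      ≤ Real.sqrt 2 * (∫ t in (0:ℝ)..1, |deriv S t|) / (2 * Real.pi * ((j / 2 : ℕ) : ℝ)) := by
  have hj1 : j ≠ 1 := by omega
  have hk : 1 ≤ j / 2 := by omega
  have hsq : (0:ℝ) ≤ Real.sqrt 2 := Real.sqrt_nonneg 2
  rcases Nat.even_or_odd j with he | ho
  · have : ∀ t : ℝ, S t * phi j t
        = Real.sqrt 2 * (S t * Real.cos (2 * Real.pi * ((j / 2 : ℕ) : ℝ) * t)) := by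
      intro t; simp only [phi, hj1, if_false, he, if_true]; ring
    simp only [this, intervalIntegral.integral_const_mul, abs_mul, abs_of_nonneg hsq,
      mul_div_assoc]
    exact mul_le_mul_of_nonneg_left (ibp_cos S hS _ hk) hsq
  · have : ∀ t : ℝ, S t * phi j t
        = Real.sqrt 2 * (S t * Real.sin (2 * Real.pi * ((j / 2 : ℕ) : ℝ) * t)) := by
      intro t
      simp only [phi, hj1, if_false, Nat.not_even_iff_odd.mpr ho, if_false]; ring
    simp only [this, intervalIntegral.integral_const_mul, abs_mul, abs_of_nonneg hsq,
      mul_div_assoc]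
    exact mul_le_mul_of_nonneg_left (ibp_sin S hS hper _ hk) hsq

lemma theta_sq_bound (S : ℝ → ℝ) (hS : ContDiff ℝ 1 S) (hper : S 0 = S 1)
    (j : ℕ) (hj : 2 ≤ j) :
    (∫ t in (0:ℝ)..1, S t * phi j t) ^ 2
      ≤ 4 * (∫ t in (0:ℝ)..1, |deriv S t|) ^ 2 / Real.pi ^ 2
          * (1 / ((j:ℝ) - 1) - 1 / (j:ℝ)) := by
  set I := ∫ t in (0:ℝ)..1, |deriv S t| with hI
  have hInn : 0 ≤ I :=
    intervalIntegral.integral_nonneg zero_le_one (fun _ _ => abs_nonneg _)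
  set k := j / 2 with hkdef
  have hk1 : 1 ≤ k := by omega
  have hkr : (1:ℝ) ≤ (k:ℝ) := by exact_mod_cast hk1
  have hjk : (j:ℝ) ≤ 2 * (k:ℝ) + 1 := by
    have : j ≤ 2 * k + 1 := by omega
    exact_mod_cast this
  have hjr : (2:ℝ) ≤ (j:ℝ) := by exact_mod_cast hj
  have hπ := Real.pi_pos
  have h1 := theta_abs_bound S hS hper j hj
  have h2 : (∫ t in (0:ℝ)..1, S t * phi j t) ^ 2
      ≤ (Real.sqrt 2 * I / (2 * Real.pi * (k:ℝ))) ^ 2 := by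
    rw [← sq_abs]
    exact pow_le_pow_left₀ (abs_nonneg _) h1 2
  refine h2.trans ?_
  rw [div_pow, mul_pow, Real.sq_sqrt (by norm_num : (0:ℝ) ≤ 2)]
  have hrw : 1 / ((j:ℝ) - 1) - 1 / (j:ℝ) = 1 / (((j:ℝ) - 1) * j) := by
    rw [div_sub_div _ _ (by linarith) (by linarith)]
    congr 1; ring
  have hjpos : (0:ℝ) < (j:ℝ) - 1 := by linarith
  rw [hrw, mul_one_div, div_div, div_le_div_iff₀ (by positivity) (by positivity)]
  nlinarith [sq_nonneg I, sq_nonneg Real.pi, mul_nonneg (sq_nonneg I) (sq_nonneg Real.pi),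
    mul_le_mul_of_nonneg_left (mul_le_mul hjk hjk (by linarith) (by linarith))
      (mul_nonneg (sq_nonneg I) (sq_nonneg Real.pi)),
    mul_le_mul_of_nonneg_left hkr (mul_nonneg (mul_nonneg (sq_nonneg I) (sq_nonneg Real.pi)) (by positivity : (0:ℝ) ≤ (k:ℝ)))]

lemma tele_sum_bound (l : ℕ) (hl : 2 ≤ l) (s : Finset {j : ℕ // l ≤ j}) :
    ∑ i ∈ s, (1 / ((i.1:ℝ) - 1) - 1 / (i.1:ℝ)) ≤ 1 / ((l:ℝ) - 1) := by
  set f : ℕ → ℝ := fun j => 1 / ((j:ℝ) - 1) - 1 / (j:ℝ) with hf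
  have hfnonneg : ∀ j : ℕ, 2 ≤ j → 0 ≤ f j := by
    intro j hj
    have hjr : (2:ℝ) ≤ (j:ℝ) := by exact_mod_cast hj
    have h1 : (0:ℝ) < (j:ℝ) - 1 := by linarith
    have := one_div_le_one_div_of_le h1 (by linarith : (j:ℝ) - 1 ≤ (j:ℝ))
    simp only [hf]; linarith
  have hsum_eq : ∑ i ∈ s, f i.1 = ∑ j ∈ s.image Subtype.val, f j :=
    (Finset.sum_image (fun x _ y _ h => Subtype.ext h)).symm
  set t := s.image Subtype.val with ht
  have htmem : ∀ j ∈ t, l ≤ j := by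
    intro j hj
    obtain ⟨i, _, rfl⟩ := Finset.mem_image.mp hj
    exact i.2
  set N := t.sup id + 1 with hN
  have hsub : t ⊆ Finset.Ico l N := by
    intro j hj
    rw [Finset.mem_Ico]
    exact ⟨htmem j hj, Nat.lt_succ_of_le (Finset.le_sup (f := id) hj)⟩
  have hlr : (2:ℝ) ≤ (l:ℝ) := by exact_mod_cast hl
  calc ∑ i ∈ s, f i.1 = ∑ j ∈ t, f j := hsum_eq
    _ ≤ ∑ j ∈ Finset.Ico l N, f j := by
        apply Finset.sum_le_sum_of_subset_of_nonneg hsub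
        intro j hj _
        exact hfnonneg j (le_trans hl (Finset.mem_Ico.mp hj).1)
    _ = ∑ i ∈ Finset.range (N - l), f (l + i) := Finset.sum_Ico_eq_sum_range f l N
    _ = ∑ i ∈ Finset.range (N - l),
          ((fun i : ℕ => 1 / (((l:ℝ) + i) - 1)) i - (fun i : ℕ => 1 / (((l:ℝ) + i) - 1)) (i+1)) := by
        apply Finset.sum_congr rfl
        intro i _
        simp only [hf]
        push_cast
        ring_nf
    _ = 1 / (((l:ℝ) + 0) - 1) - 1 / (((l:ℝ) + (N - l : ℕ)) - 1) := by
        simpa using Finset.sum_range_sub' (fun i : ℕ => 1 / (((l:ℝ) + i) - 1)) (N - l)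
    _ ≤ 1 / ((l:ℝ) - 1) := by
        have h2 : (0:ℝ) ≤ 1 / (((l:ℝ) + (N - l : ℕ)) - 1) := by
          apply one_div_nonneg.mpr
          have : (0:ℝ) ≤ ((N - l : ℕ) : ℝ) := Nat.cast_nonneg _
          linarith
        simp only [add_zero]
        linarith

theorem tail_fourier_bound (S : ℝ → ℝ) (hS : ContDiff ℝ 1 S) (hper : S 0 = S 1)
    (θ : ℕ → ℝ) (hθ : ∀ j, θ j = ∫ t in (0:ℝ)..1, S t * phi j t) :
    ∀ l : ℕ, 2 ≤ l →
      (l : ℝ) * (∑' j : {j : ℕ // l ≤ j}, (θ j) ^ 2)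
        ≤ 4 * (∫ t in (0:ℝ)..1, |deriv S t|) ^ 2 := by
  intro l hl
  set I := ∫ t in (0:ℝ)..1, |deriv S t| with hI
  have hInn : 0 ≤ I :=
    intervalIntegral.integral_nonneg zero_le_one (fun _ _ => abs_nonneg _)
  have hlr : (2:ℝ) ≤ (l:ℝ) := by exact_mod_cast hl
  have hl1 : (0:ℝ) < (l:ℝ) - 1 := by linarith
  have hπ := Real.pi_pos
  have hbound : (∑' j : {j : ℕ // l ≤ j}, (θ j) ^ 2)
      ≤ 4 * I ^ 2 / Real.pi ^ 2 * (1 / ((l:ℝ) - 1)) := by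
    apply tsum_le_of_sum_le' (by positivity)
    intro s
    calc ∑ i ∈ s, θ i.1 ^ 2
        ≤ ∑ i ∈ s, 4 * I ^ 2 / Real.pi ^ 2 * (1 / ((i.1:ℝ) - 1) - 1 / (i.1:ℝ)) := by
          apply Finset.sum_le_sum
          intro i _
          rw [hθ]
          exact theta_sq_bound S hS hper i.1 (le_trans hl i.2)
      _ = 4 * I ^ 2 / Real.pi ^ 2 * ∑ i ∈ s, (1 / ((i.1:ℝ) - 1) - 1 / (i.1:ℝ)) :=
          (Finset.mul_sum _ _ _).symm
      _ ≤ 4 * I ^ 2 / Real.pi ^ 2 * (1 / ((l:ℝ) - 1)) :=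
          mul_le_mul_of_nonneg_left (tele_sum_bound l hl s) (by positivity)
  calc (l:ℝ) * (∑' j : {j : ℕ // l ≤ j}, (θ j) ^ 2)
      ≤ (l:ℝ) * (4 * I ^ 2 / Real.pi ^ 2 * (1 / ((l:ℝ) - 1))) :=
        mul_le_mul_of_nonneg_left hbound (by positivity)
    _ = 4 * I ^ 2 * ((l:ℝ) / (((l:ℝ) - 1) * Real.pi ^ 2)) := by
        field_simp
    _ ≤ 4 * I ^ 2 * 1 := by
        apply mul_le_mul_of_nonneg_left _ (by positivity)
        rw [div_le_one (by positivity)]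
        have h9 : (9:ℝ) ≤ Real.pi ^ 2 := by nlinarith [Real.pi_gt_three]
        nlinarith [mul_le_mul_of_nonneg_left h9 hl1.le]
    _ = 4 * I ^ 2 := mul_one _
end

section
/- Let υ : ℝ → ℝ be continuously differentiable and Ψ : [0,n] → ℝ integrable, with n ≥ 1 and α > 0. Define ϖ_{1,Ψ} = max over 0 ≤ v ≤ n and 0 ≤ t ≤ n−v of |∫₀ᵗ Ψ(u+v) du|. Then sup_{0 ≤ t ≤ n} |∫₀ᵗ e^{-α(t-s)} Ψ(s) υ(s) ds| ≤ ϖ_{1,Ψ}·(2‖υ‖_* + ‖υ'‖_*/α), where ‖f‖_* = sup_{0 ≤ t ≤ n} |f(t)|. -/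
open MeasureTheory Real

/-- Lemma A.3: bound for exponentially-weighted integrals.  Here `W` is an upper
bound for the correlation measure ϖ_{1,Ψ} = max_{0≤v≤n, 0≤t≤n-v} |∫₀ᵗ Ψ(u+v) du|. -/
theorem exp_weighted_integral_bound (n : ℝ) (hn : 1 ≤ n) (α : ℝ) (hα : 0 < α)
    (υ Ψ : ℝ → ℝ) (hυ : ContDiff ℝ 1 υ)
    (hΨ : IntegrableOn Ψ (Set.Icc 0 n))
    (W Mυ Mυ' : ℝ)
    (hW : ∀ v ∈ Set.Icc (0:ℝ) n, ∀ t ∈ Set.Icc (0:ℝ) (n - v),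
      |∫ u in (0:ℝ)..t, Ψ (u + v)| ≤ W)
    (hMυ : ∀ t ∈ Set.Icc (0:ℝ) n, |υ t| ≤ Mυ)
    (hMυ' : ∀ t ∈ Set.Icc (0:ℝ) n, |deriv υ t| ≤ Mυ') :
    ∀ t ∈ Set.Icc (0:ℝ) n,
      |∫ s in (0:ℝ)..t, Real.exp (-α * (t - s)) * Ψ s * υ s|
        ≤ W * (2 * Mυ + Mυ' / α) := by
  intro t ht
  obtain ⟨ht0, htn⟩ := ht
  have h0n : (0:ℝ) ≤ n := by linarith
  -- basic positivity facts
  have hMυ0 : 0 ≤ Mυ := (abs_nonneg _).trans (hMυ 0 ⟨le_rfl, h0n⟩)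
  have hMυ'0 : 0 ≤ Mυ' := (abs_nonneg _).trans (hMυ' 0 ⟨le_rfl, h0n⟩)
  have hW0 : 0 ≤ W := by
    have := hW 0 ⟨le_rfl, h0n⟩ 0 ⟨le_rfl, by linarith⟩
    simpa using this
  set C : ℝ := 2 * Mυ + Mυ' / α with hC
  have hC0 : 0 ≤ C := by positivity
  -- derivative of υ is continuous
  have hυc : Continuous υ := hυ.continuous
  have hwcont : Continuous (fun s : ℝ => Real.exp (-α * (t - s))) :=
    Real.continuous_exp.comp (continuous_const.mul (continuous_const.sub continuous_id))
  have hυ' : Continuous (deriv υ) := hυ.continuous_deriv le_rfl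
  -- the functions G and G'
  set G : ℝ → ℝ := fun s => Real.exp (-α * (t - s)) * υ s with hGdef
  set G' : ℝ → ℝ := fun s =>
    α * Real.exp (-α * (t - s)) * υ s + Real.exp (-α * (t - s)) * deriv υ s with hG'def
  have hGcont : Continuous G := by
    exact hwcont.mul hυc
  have hG'cont : Continuous G' := by
    apply Continuous.add
    · exact (continuous_const.mul hwcont).mul hυc
    · exact hwcont.mul hυ'
  have hGderiv : ∀ s : ℝ, HasDerivAt G (G' s) s := by
    intro s
    have hinner : HasDerivAt (fun s : ℝ => -α * (t - s)) α s := by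
      have h := ((hasDerivAt_id s).const_mul α).sub_const (α * t)
      have : (fun s : ℝ => α * s - α * t) = fun s : ℝ => -α * (t - s) := by
        funext x; ring
      simpa [this] using h
    have hexp : HasDerivAt (fun s : ℝ => Real.exp (-α * (t - s)))
        (Real.exp (-α * (t - s)) * α) s := hinner.exp
    have hud : HasDerivAt υ (deriv υ s) s :=
      ((hυ.differentiable one_ne_zero) s).hasDerivAt
    have := hexp.mul hud
    refine this.congr_deriv ?_
    simp only [hG'def]
    ring
  -- pointwise bounds for G and G' on [0, t]
  have hGbd : ∀ s ∈ Set.Icc (0:ℝ) t, |G s| ≤ Mυ := by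
    intro s hs
    have hsn : s ∈ Set.Icc (0:ℝ) n := ⟨hs.1, hs.2.trans htn⟩
    have hexple : Real.exp (-α * (t - s)) ≤ 1 := by
      apply Real.exp_le_one_iff.2
      nlinarith [hs.2]
    have hexppos : (0:ℝ) < Real.exp (-α * (t - s)) := Real.exp_pos _
    calc |G s| = Real.exp (-α * (t - s)) * |υ s| := by
          simp only [hGdef, abs_mul, abs_of_pos hexppos]
      _ ≤ 1 * Mυ := by
          apply mul_le_mul hexple (hMυ s hsn) (abs_nonneg _) zero_le_one
      _ = Mυ := one_mul _
  have hG'bd : ∀ s ∈ Set.Icc (0:ℝ) t,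
      |G' s| ≤ (α * Mυ + Mυ') * Real.exp (-α * (t - s)) := by
    intro s hs
    have hsn : s ∈ Set.Icc (0:ℝ) n := ⟨hs.1, hs.2.trans htn⟩
    have hexppos : (0:ℝ) < Real.exp (-α * (t - s)) := Real.exp_pos _
    calc |G' s| ≤ |α * Real.exp (-α * (t - s)) * υ s|
          + |Real.exp (-α * (t - s)) * deriv υ s| := abs_add_le _ _
      _ = α * Real.exp (-α * (t - s)) * |υ s|
          + Real.exp (-α * (t - s)) * |deriv υ s| := by
          rw [abs_mul, abs_mul, abs_mul, abs_of_pos hα, abs_of_pos hexppos]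
      _ ≤ α * Real.exp (-α * (t - s)) * Mυ + Real.exp (-α * (t - s)) * Mυ' := by
          gcongr
          · exact hMυ s hsn
          · exact hMυ' s hsn
      _ = (α * Mυ + Mυ') * Real.exp (-α * (t - s)) := by ring
  -- integral of the exponential weight
  have hexpint : ∫ s in (0:ℝ)..t, Real.exp (-α * (t - s))
      = (1 - Real.exp (-α * t)) / α := by
    have hder : ∀ s ∈ Set.uIcc (0:ℝ) t,
        HasDerivAt (fun s : ℝ => Real.exp (-α * (t - s)) / α)
          (Real.exp (-α * (t - s))) s := by
      intro s _
      have hinner : HasDerivAt (fun s : ℝ => -α * (t - s)) α s := by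
        have h := ((hasDerivAt_id s).const_mul α).sub_const (α * t)
        have : (fun s : ℝ => α * s - α * t) = fun s : ℝ => -α * (t - s) := by
          funext x; ring
        simpa [this] using h
      have := hinner.exp.div_const α
      refine this.congr_deriv ?_
      field_simp
    rw [intervalIntegral.integral_eq_sub_of_hasDerivAt hder
      (hwcont.intervalIntegrable 0 t)]
    simp
    ring
  have hexpint_le : ∫ s in (0:ℝ)..t, Real.exp (-α * (t - s)) ≤ 1 / α := by
    rw [hexpint]
    have h1 : (0:ℝ) < Real.exp (-α * t) := Real.exp_pos _
    exact (div_le_div_iff_of_pos_right hα).2 (by linarith)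
  -- the indicator extension of Ψ
  set f : ℝ → ℝ := (Set.Icc (0:ℝ) n).indicator Ψ with hfdef
  have hfint : Integrable f := (integrable_indicator_iff measurableSet_Icc).2 hΨ
  have hfΨ : ∀ s ∈ Set.Icc (0:ℝ) t, f s = Ψ s := by
    intro s hs
    exact Set.indicator_of_mem (Set.mem_Icc.mpr ⟨hs.1, hs.2.trans htn⟩) Ψ
  -- interval integrability of Ψ on [0, t]
  have hΨint : IntervalIntegrable Ψ volume 0 t := by
    rw [intervalIntegrable_iff_integrableOn_Ioc_of_le ht0]
    exact hΨ.mono_set (Set.Ioc_subset_Icc_self.trans (Set.Icc_subset_Icc le_rfl htn))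
  -- main estimate for every ε > 0
  have key : ∀ ε : ℝ, 0 < ε →
      |∫ s in (0:ℝ)..t, Real.exp (-α * (t - s)) * Ψ s * υ s| ≤ W * C + ε := by
    intro ε hε
    set δ : ℝ := ε / (C + Mυ + 1) with hδdef
    have hden : (0:ℝ) < C + Mυ + 1 := by linarith
    have hδ : 0 < δ := div_pos hε hden
    obtain ⟨g, -, hg1, hgc, hgi⟩ := hfint.exists_hasCompactSupport_integral_sub_le hδ
    -- the primitive of g
    set Φg : ℝ → ℝ := fun x => ∫ u in (0:ℝ)..x, g u with hΦgdef
    have hΦgderiv : ∀ x : ℝ, HasDerivAt Φg (g x) x := by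
      intro x
      exact intervalIntegral.integral_hasDerivAt_right (hgc.intervalIntegrable 0 x)
        hgc.aestronglyMeasurable.stronglyMeasurableAtFilter hgc.continuousAt
    have hΦgcont : Continuous Φg :=
      continuous_iff_continuousAt.2 fun x => (hΦgderiv x).continuousAt
    -- |f - g| is integrable and controls all errors
    have hfg : Integrable (fun x => |f x - g x|) := (hfint.sub hgi).abs
    have hfg_nonneg : 0 ≤ᵐ[volume] fun x => |f x - g x| :=
      Filter.Eventually.of_forall fun x => abs_nonneg _
    have herr : ∀ x ∈ Set.Icc (0:ℝ) t, ∫ s in (0:ℝ)..x, |f s - g s| ≤ δ := by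
      intro x hx
      calc ∫ s in (0:ℝ)..x, |f s - g s|
          = ∫ s in Set.Ioc (0:ℝ) x, |f s - g s| := by
            rw [intervalIntegral.integral_of_le hx.1]
        _ ≤ ∫ s, |f s - g s| := setIntegral_le_integral hfg hfg_nonneg
        _ = ∫ s, ‖f s - g s‖ := by simp [Real.norm_eq_abs]
        _ ≤ δ := hg1
    -- bound on the primitive Φg
    have hΦgbd : ∀ x ∈ Set.Icc (0:ℝ) t, |Φg x| ≤ W + δ := by
      intro x hx
      have hxn : x ∈ Set.Icc (0:ℝ) n := ⟨hx.1, hx.2.trans htn⟩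
      have hWx : |∫ u in (0:ℝ)..x, Ψ u| ≤ W := by
        have := hW 0 ⟨le_rfl, h0n⟩ x ⟨hx.1, by simpa using hxn.2⟩
        simpa using this
      have hsplit : Φg x = (∫ u in (0:ℝ)..x, Ψ u) - ∫ u in (0:ℝ)..x, (f u - g u) := by
        have hΨf : (∫ u in (0:ℝ)..x, Ψ u) = ∫ u in (0:ℝ)..x, f u := by
          apply intervalIntegral.integral_congr
          intro u hu
          rw [Set.uIcc_of_le hx.1] at hu
          exact (hfΨ u ⟨hu.1, hu.2.trans hx.2⟩).symm
        rw [hΨf, intervalIntegral.integral_sub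
          hfint.intervalIntegrable hgi.intervalIntegrable]
        simp [hΦgdef]
      have habs : |∫ u in (0:ℝ)..x, (f u - g u)| ≤ δ := by
        calc |∫ u in (0:ℝ)..x, (f u - g u)| ≤ ∫ u in (0:ℝ)..x, |f u - g u| :=
              intervalIntegral.abs_integral_le_integral_abs hx.1
          _ ≤ δ := herr x hx
      calc |Φg x| ≤ |∫ u in (0:ℝ)..x, Ψ u| + |∫ u in (0:ℝ)..x, (f u - g u)| := by
            rw [hsplit]; exact abs_sub _ _
        _ ≤ W + δ := add_le_add hWx habs
    -- integration by parts for the continuous approximant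
    have hibp : ∫ s in (0:ℝ)..t, G s * g s
        = G t * Φg t - G 0 * Φg 0 - ∫ s in (0:ℝ)..t, G' s * Φg s := by
      apply intervalIntegral.integral_mul_deriv_eq_deriv_mul
        (fun x _ => hGderiv x) (fun x _ => hΦgderiv x)
        (hG'cont.intervalIntegrable 0 t) (hgc.intervalIntegrable 0 t)
    have hΦg0 : Φg 0 = 0 := intervalIntegral.integral_same
    -- bound for ∫ G' Φg
    have hint1 : |∫ s in (0:ℝ)..t, G' s * Φg s| ≤ (W + δ) * (Mυ + Mυ' / α) := by
      have hmono : ∫ s in (0:ℝ)..t, |G' s * Φg s|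
          ≤ ∫ s in (0:ℝ)..t, (α * Mυ + Mυ') * (W + δ) * Real.exp (-α * (t - s)) := by
        apply intervalIntegral.integral_mono_on ht0
        · exact (hG'cont.mul hΦgcont).abs.intervalIntegrable 0 t
        · exact (continuous_const.mul hwcont).intervalIntegrable 0 t
        · intro s hs
          rw [abs_mul]
          calc |G' s| * |Φg s|
              ≤ ((α * Mυ + Mυ') * Real.exp (-α * (t - s))) * (W + δ) := by
                apply mul_le_mul (hG'bd s hs) (hΦgbd s hs) (abs_nonneg _)
                positivity
            _ = (α * Mυ + Mυ') * (W + δ) * Real.exp (-α * (t - s)) := by ring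
      calc |∫ s in (0:ℝ)..t, G' s * Φg s|
          ≤ ∫ s in (0:ℝ)..t, |G' s * Φg s| :=
            intervalIntegral.abs_integral_le_integral_abs ht0
        _ ≤ ∫ s in (0:ℝ)..t, (α * Mυ + Mυ') * (W + δ) * Real.exp (-α * (t - s)) :=
            hmono
        _ = (α * Mυ + Mυ') * (W + δ) * ∫ s in (0:ℝ)..t, Real.exp (-α * (t - s)) := by
            rw [intervalIntegral.integral_const_mul]
        _ ≤ (α * Mυ + Mυ') * (W + δ) * (1 / α) := by
            apply mul_le_mul_of_nonneg_left hexpint_le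
            positivity
        _ = (W + δ) * (Mυ + Mυ' / α) := by
            field_simp
    -- bound for the approximant integral
    have hIg : |∫ s in (0:ℝ)..t, G s * g s| ≤ (W + δ) * C := by
      rw [hibp, hΦg0]
      have h1 : |G t * Φg t| ≤ Mυ * (W + δ) := by
        rw [abs_mul]
        apply mul_le_mul (hGbd t ⟨ht0, le_rfl⟩) (hΦgbd t ⟨ht0, le_rfl⟩) (abs_nonneg _)
          hMυ0
      calc |G t * Φg t - G 0 * 0 - ∫ s in (0:ℝ)..t, G' s * Φg s|
          = |G t * Φg t - ∫ s in (0:ℝ)..t, G' s * Φg s| := by ring_nf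
        _ ≤ |G t * Φg t| + |∫ s in (0:ℝ)..t, G' s * Φg s| := abs_sub _ _
        _ ≤ Mυ * (W + δ) + (W + δ) * (Mυ + Mυ' / α) := add_le_add h1 hint1
        _ = (W + δ) * C := by rw [hC]; ring
    -- comparison between the Ψ-integral and the g-integral
    have hcomp : |(∫ s in (0:ℝ)..t, G s * Ψ s) - ∫ s in (0:ℝ)..t, G s * g s|
        ≤ Mυ * δ := by
      have hGΨint : IntervalIntegrable (fun s => G s * Ψ s) volume 0 t :=
        hΨint.continuousOn_mul hGcont.continuousOn
      have hGgint : IntervalIntegrable (fun s => G s * g s) volume 0 t :=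
        (hGcont.mul hgc).intervalIntegrable 0 t
      rw [← intervalIntegral.integral_sub hGΨint hGgint]
      calc |∫ s in (0:ℝ)..t, (G s * Ψ s - G s * g s)|
          ≤ ∫ s in (0:ℝ)..t, |G s * Ψ s - G s * g s| :=
            intervalIntegral.abs_integral_le_integral_abs ht0
        _ ≤ ∫ s in (0:ℝ)..t, Mυ * |f s - g s| := by
            apply intervalIntegral.integral_mono_on ht0
            · exact ((hGΨint.sub hGgint).abs)
            · exact hfg.intervalIntegrable.const_mul Mυ
            · intro s hs
              have : G s * Ψ s - G s * g s = G s * (f s - g s) := by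
                rw [hfΨ s hs]; ring
              rw [this, abs_mul]
              exact mul_le_mul_of_nonneg_right (hGbd s hs) (abs_nonneg _)
        _ = Mυ * ∫ s in (0:ℝ)..t, |f s - g s| := by
            rw [intervalIntegral.integral_const_mul]
        _ ≤ Mυ * δ := mul_le_mul_of_nonneg_left (herr t ⟨ht0, le_rfl⟩) hMυ0
    -- assemble
    have hGΨeq : (∫ s in (0:ℝ)..t, Real.exp (-α * (t - s)) * Ψ s * υ s)
        = ∫ s in (0:ℝ)..t, G s * Ψ s := by
      apply intervalIntegral.integral_congr
      intro s _
      simp only [hGdef]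
      ring
    have hfinal : |∫ s in (0:ℝ)..t, G s * Ψ s| ≤ (W + δ) * C + Mυ * δ := by
      calc |∫ s in (0:ℝ)..t, G s * Ψ s|
          ≤ |(∫ s in (0:ℝ)..t, G s * Ψ s) - ∫ s in (0:ℝ)..t, G s * g s|
            + |∫ s in (0:ℝ)..t, G s * g s| := by
            have h := abs_add_le
              ((∫ s in (0:ℝ)..t, G s * Ψ s) - ∫ s in (0:ℝ)..t, G s * g s)
              (∫ s in (0:ℝ)..t, G s * g s)
            simpa using h
      _ ≤ Mυ * δ + (W + δ) * C := add_le_add hcomp hIg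
      _ = (W + δ) * C + Mυ * δ := by ring
    rw [hGΨeq]
    have hδsmall : δ * (C + Mυ) ≤ ε := by
      rw [hδdef]
      rw [div_mul_eq_mul_div, div_le_iff₀ hden]
      nlinarith
    calc |∫ s in (0:ℝ)..t, G s * Ψ s| ≤ (W + δ) * C + Mυ * δ := hfinal
      _ = W * C + δ * (C + Mυ) := by ring
      _ ≤ W * C + ε := by linarith
  -- conclude by letting ε → 0
  by_contra hcon
  push_neg at hcon
  have hε : 0 < (|∫ s in (0:ℝ)..t, Real.exp (-α * (t - s)) * Ψ s * υ s| - W * C) / 2 :=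
    half_pos (sub_pos.2 hcon)
  have := key _ hε
  linarith
end

section
/- Let a ≤ 0, n ≥ 1, and let f, g : [0,∞) → ℝ be bounded measurable functions. Define ϖ*_{f,g} = max( max_{0≤v≤n, 0≤t≤n-v} |∫₀ᵗ f(u+v)g(u) du|, max_{0≤v≤n, 0≤t≤n-v} |∫₀ᵗ g(u+v)f(u) du| ). Then for every 0 ≤ v ≤ n and 0 ≤ t ≤ n−v, |∫₀ᵗ f(s+v) g(s) (1 + e^{2as}) ds| ≤ 3·ϖ*_{f,g}. -/
open MeasureTheory Real

/-- Triangle Fubini: swap order of integration over `{0 ≤ s < u ≤ t}`. -/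
lemma triangle_swap (F h : ℝ → ℝ) (hFm : Measurable F) (C : ℝ) (hC : 0 ≤ C)
    (hFb : ∀ x, |F x| ≤ C) (hh : Continuous h) (t : ℝ) (ht : 0 ≤ t) :
    ∫ s in (0:ℝ)..t, F s * (∫ u in s..t, h u) =
      ∫ u in (0:ℝ)..t, h u * (∫ s in (0:ℝ)..u, F s) := by
  set μ := volume.restrict (Set.Ioc (0:ℝ) t) with hμ
  set K : ℝ → ℝ → ℝ := fun s u => if s < u then F s * h u else 0 with hK
  obtain ⟨D, hD0, hD⟩ : ∃ D, 0 ≤ D ∧ ∀ u ∈ Set.Ioc (0:ℝ) t, |h u| ≤ D := by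
    obtain ⟨D, hD⟩ := (isCompact_Icc (a := (0:ℝ)) (b := t)).exists_bound_of_continuousOn
      hh.continuousOn
    refine ⟨max D 0, le_max_right _ _, fun u hu => ?_⟩
    exact le_trans (by simpa using hD u ⟨hu.1.le, hu.2⟩) (le_max_left _ _)
  have hKm : Measurable (Function.uncurry K) := by
    apply Measurable.ite (measurableSet_lt measurable_fst measurable_snd)
    · exact (hFm.comp measurable_fst).mul (hh.measurable.comp measurable_snd)
    · exact measurable_const
  have hint : Integrable (Function.uncurry K) (μ.prod μ) := by
    refine ⟨hKm.aestronglyMeasurable, ?_⟩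
    apply MeasureTheory.HasFiniteIntegral.of_bounded (C := C * D)
    rw [hμ, Measure.prod_restrict]
    refine (ae_restrict_iff' ((measurableSet_Ioc).prod measurableSet_Ioc)).2
      (Filter.Eventually.of_forall fun p hp => ?_)
    simp only [Function.uncurry, K]
    split_ifs with hlt
    · calc ‖F p.1 * h p.2‖ = |F p.1| * |h p.2| := abs_mul _ _
        _ ≤ C * D := mul_le_mul (hFb _) (hD _ hp.2) (abs_nonneg _) hC
    · simpa using mul_nonneg hC hD0
  have hswap := MeasureTheory.integral_integral_swap hint
  -- identify inner integrals
  have hleft : ∀ s ∈ Set.Ioc (0:ℝ) t, (∫ u, K s u ∂μ) = F s * ∫ u in s..t, h u := by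
    intro s hs
    have h1 : (fun u => K s u) = (Set.Ioi s).indicator (fun u => F s * h u) := by
      funext u; simp [K, Set.indicator_apply, Set.mem_Ioi]
    rw [h1, hμ, MeasureTheory.integral_indicator measurableSet_Ioi,
      Measure.restrict_restrict measurableSet_Ioi]
    have h2 : Set.Ioi s ∩ Set.Ioc 0 t = Set.Ioc s t := by
      ext x; simp only [Set.mem_inter_iff, Set.mem_Ioi, Set.mem_Ioc]
      constructor
      · rintro ⟨h3, _, h5⟩; exact ⟨h3, h5⟩
      · rintro ⟨h3, h4⟩; exact ⟨h3, hs.1.trans h3, h4⟩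
    rw [h2, intervalIntegral.integral_of_le hs.2, MeasureTheory.integral_const_mul]
  have hright : ∀ u ∈ Set.Ioc (0:ℝ) t, (∫ s, K s u ∂μ) = h u * ∫ s in (0:ℝ)..u, F s := by
    intro u hu
    have h1 : (fun s => K s u) = (Set.Iio u).indicator (fun s => F s * h u) := by
      funext s; simp [K, Set.indicator_apply, Set.mem_Iio]
    rw [h1, hμ, MeasureTheory.integral_indicator measurableSet_Iio,
      Measure.restrict_restrict measurableSet_Iio]
    have h2 : Set.Iio u ∩ Set.Ioc 0 t = Set.Ioo 0 u := by
      ext x; simp only [Set.mem_inter_iff, Set.mem_Iio, Set.mem_Ioc, Set.mem_Ioo]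
      constructor
      · rintro ⟨h3, h4, _⟩; exact ⟨h4, h3⟩
      · rintro ⟨h3, h4⟩; exact ⟨h4, h3, (h4.le.trans hu.2)⟩
    rw [h2, ← MeasureTheory.integral_Ioc_eq_integral_Ioo,
      ← intervalIntegral.integral_of_le hu.1.le]
    rw [intervalIntegral.integral_mul_const, mul_comm]
  rw [intervalIntegral.integral_of_le ht, intervalIntegral.integral_of_le ht]
  calc ∫ s in Set.Ioc (0:ℝ) t, F s * (∫ u in s..t, h u)
      = ∫ s, (∫ u, K s u ∂μ) ∂μ :=
        (MeasureTheory.setIntegral_congr_fun measurableSet_Ioc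
          fun s hs => (hleft s hs).symm).symm ▸ rfl
    _ = ∫ u, (∫ s, K s u ∂μ) ∂μ := hswap
    _ = ∫ u in Set.Ioc (0:ℝ) t, h u * (∫ s in (0:ℝ)..u, F s) :=
        MeasureTheory.setIntegral_congr_fun measurableSet_Ioc fun u hu => hright u hu

/-- Bounded measurable functions are interval integrable. -/
lemma bdd_intervalIntegrable (F : ℝ → ℝ) (hFm : Measurable F) {C : ℝ}
    (hFb : ∀ x, |F x| ≤ C) (b c : ℝ) : IntervalIntegrable F volume b c := by
  rw [intervalIntegrable_iff]
  have hfin : volume (Set.uIoc b c) ≠ ⊤ := by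
    show volume (Set.Ioc (b ⊓ c) (b ⊔ c)) ≠ ⊤
    exact measure_Ioc_lt_top.ne
  exact Measure.integrableOn_of_bounded hfin hFm.aestronglyMeasurable
    (Filter.Eventually.of_forall fun x => by simpa using hFb x)

/-- For a ≤ 0, |∫₀ᵗ f(s+v) g(s) (1 + e^{2as}) ds| ≤ 3 ϖ*_{f,g}; here `W` is an
upper bound on both shifted-correlation families defining ϖ*_{f,g}. -/
theorem shifted_correlation_bound (a : ℝ) (ha : a ≤ 0) (n : ℝ) (hn : 1 ≤ n)
    (f g : ℝ → ℝ) (hf : Measurable f) (hg : Measurable g)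
    (hfb : ∃ C, ∀ x, |f x| ≤ C) (hgb : ∃ C, ∀ x, |g x| ≤ C)
    (W : ℝ)
    (hW1 : ∀ v ∈ Set.Icc (0:ℝ) n, ∀ t ∈ Set.Icc (0:ℝ) (n - v),
      |∫ u in (0:ℝ)..t, f (u + v) * g u| ≤ W)
    (hW2 : ∀ v ∈ Set.Icc (0:ℝ) n, ∀ t ∈ Set.Icc (0:ℝ) (n - v),
      |∫ u in (0:ℝ)..t, g (u + v) * f u| ≤ W) :
    ∀ v ∈ Set.Icc (0:ℝ) n, ∀ t ∈ Set.Icc (0:ℝ) (n - v),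
      |∫ s in (0:ℝ)..t, f (s + v) * g s * (1 + Real.exp (2 * a * s))| ≤ 3 * W := by
  obtain ⟨Cf, hCf⟩ := hfb
  obtain ⟨Cg, hCg⟩ := hgb
  intro v hv t ht
  have ht0 : (0:ℝ) ≤ t := ht.1
  set F : ℝ → ℝ := fun s => f (s + v) * g s with hFdef
  have hFm : Measurable F := (hf.comp (measurable_id.add_const v)).mul hg
  have hCf0 : 0 ≤ Cf := (abs_nonneg _).trans (hCf 0)
  have hCg0 : 0 ≤ Cg := (abs_nonneg _).trans (hCg 0)
  have hFb : ∀ x, |F x| ≤ Cf * Cg := fun x => by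
    rw [abs_mul]; exact mul_le_mul (hCf _) (hCg _) (abs_nonneg _) hCf0
  have hFint : ∀ b c : ℝ, IntervalIntegrable F volume b c := by
    intro b c
    exact bdd_intervalIntegrable F hFm hFb b c
  set h : ℝ → ℝ := fun u => 2 * a * Real.exp (2 * a * u) with hhdef
  have hhc : Continuous h := by fun_prop
  have hexp : ∀ s₁ s₂ : ℝ, (∫ u in s₁..s₂, h u) =
      Real.exp (2 * a * s₂) - Real.exp (2 * a * s₁) := by
    intro s₁ s₂
    apply intervalIntegral.integral_eq_sub_of_hasDerivAt
    · intro x _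
      have : HasDerivAt (fun u : ℝ => 2 * a * u) (2 * a) x := by
        simpa using (hasDerivAt_id x).const_mul (2 * a)
      simpa [hhdef, mul_comm] using this.exp
    · exact hhc.intervalIntegrable _ _
  have hΥ : ∀ u ∈ Set.Icc (0:ℝ) t, |∫ s in (0:ℝ)..u, F s| ≤ W := by
    intro u hu
    exact hW1 v hv u ⟨hu.1, hu.2.trans ht.2⟩
  have hW0 : 0 ≤ W := le_trans (by simp) (hΥ 0 ⟨le_refl _, ht0⟩)
  have hΥc : Continuous fun u => ∫ s in (0:ℝ)..u, F s :=
    intervalIntegral.continuous_primitive (fun b c => hFint b c) 0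
  -- key identity
  have key : (∫ s in (0:ℝ)..t, F s * (1 + Real.exp (2 * a * s))) =
      (1 + Real.exp (2 * a * t)) * (∫ s in (0:ℝ)..t, F s)
        - ∫ u in (0:ℝ)..t, h u * (∫ s in (0:ℝ)..u, F s) := by
    rw [← triangle_swap F h hFm (Cf * Cg) (mul_nonneg hCf0 hCg0) hFb hhc t ht0]
    have e1 : ∀ s : ℝ, F s * (1 + Real.exp (2 * a * s)) =
        (1 + Real.exp (2 * a * t)) * F s - F s * (∫ u in s..t, h u) := by
      intro s; rw [hexp]; ring
    rw [intervalIntegral.integral_congr (fun s _ => e1 s)]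
    rw [intervalIntegral.integral_sub, intervalIntegral.integral_const_mul]
    · exact (hFint 0 t).const_mul _
    · have : (fun s => F s * ∫ u in s..t, h u) =
          fun s => F s * (Real.exp (2 * a * t) - Real.exp (2 * a * s)) := by
        funext s; rw [hexp]
      rw [this]
      exact (hFint 0 t).mul_continuousOn (Continuous.continuousOn (by fun_prop))
  show |∫ s in (0:ℝ)..t, F s * (1 + Real.exp (2 * a * s))| ≤ 3 * W
  rw [key]
  have he : Real.exp (2 * a * t) ≤ 1 :=
    Real.exp_le_one_iff.2 (mul_nonpos_of_nonpos_of_nonneg (by linarith) ht0)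
  have hB1 : |(1 + Real.exp (2 * a * t)) * (∫ s in (0:ℝ)..t, F s)| ≤ 2 * W := by
    rw [abs_mul]
    have hpos : (0:ℝ) < 1 + Real.exp (2 * a * t) := by positivity
    rw [abs_of_pos hpos]
    exact mul_le_mul (by linarith) (hΥ t ⟨ht0, le_refl t⟩) (abs_nonneg _) (by norm_num)
  have hB2 : |∫ u in (0:ℝ)..t, h u * (∫ s in (0:ℝ)..u, F s)| ≤ W := by
    have h1 := intervalIntegral.norm_integral_le_integral_norm
      (f := fun u => h u * (∫ s in (0:ℝ)..u, F s)) (μ := volume) ht0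
    have h2 : (∫ u in (0:ℝ)..t, ‖h u * (∫ s in (0:ℝ)..u, F s)‖) ≤
        ∫ u in (0:ℝ)..t, (-W) * h u := by
      apply intervalIntegral.integral_mono_on ht0
      · exact ((hhc.mul hΥc).norm).intervalIntegrable _ _
      · exact (continuous_const.mul hhc).intervalIntegrable _ _
      · intro u hu
        rw [Real.norm_eq_abs, abs_mul]
        have he2 : |h u| = -(2 * a) * Real.exp (2 * a * u) := by
          rw [hhdef]
          rw [abs_mul, abs_of_nonpos (by linarith : 2 * a ≤ 0),
            abs_of_pos (Real.exp_pos _)]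
        rw [he2]
        have : -(2 * a) * Real.exp (2 * a * u) * |∫ s in (0:ℝ)..u, F s| ≤
            -(2 * a) * Real.exp (2 * a * u) * W := by
          apply mul_le_mul_of_nonneg_left (hΥ u hu)
          have := Real.exp_pos (2 * a * u); nlinarith
        calc -(2 * a) * Real.exp (2 * a * u) * |∫ s in (0:ℝ)..u, F s|
            ≤ -(2 * a) * Real.exp (2 * a * u) * W := this
          _ = (-W) * h u := by rw [hhdef]; ring
    have h3 : (∫ u in (0:ℝ)..t, (-W) * h u) = -W * (Real.exp (2 * a * t) - 1) := by
      rw [intervalIntegral.integral_const_mul, hexp]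
      norm_num
    have h4 : -W * (Real.exp (2 * a * t) - 1) ≤ W := by
      nlinarith [Real.exp_pos (2 * a * t)]
    calc |∫ u in (0:ℝ)..t, h u * (∫ s in (0:ℝ)..u, F s)|
        ≤ ∫ u in (0:ℝ)..t, ‖h u * (∫ s in (0:ℝ)..u, F s)‖ := h1
      _ ≤ ∫ u in (0:ℝ)..t, (-W) * h u := h2
      _ = -W * (Real.exp (2 * a * t) - 1) := h3
      _ ≤ W := h4
  calc |(1 + Real.exp (2 * a * t)) * (∫ s in (0:ℝ)..t, F s)
        - ∫ u in (0:ℝ)..t, h u * (∫ s in (0:ℝ)..u, F s)|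
      ≤ |(1 + Real.exp (2 * a * t)) * (∫ s in (0:ℝ)..t, F s)|
        + |∫ u in (0:ℝ)..t, h u * (∫ s in (0:ℝ)..u, F s)| := abs_sub _ _
    _ ≤ 2 * W + W := add_le_add hB1 hB2
    _ = 3 * W := by ring
end

section
/- Let a ≤ 0 and γ_j = 2π[j/2] for j ≥ 2. Define F(v) = ∫₀^{n−v} (1 + e^{2at}) dt and D₁(n) = ∫₀ⁿ e^{av} F(v) cos(vγ_j) dv. Then |D₁(n)| ≤ (3n|a| + 10)/γ_j². -/
open Real MeasureTheory intervalIntegral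

noncomputable def PhiD1 (a x : ℝ) : ℝ := ∫ t in (0:ℝ)..x, (1 + Real.exp (2 * a * t))

lemma contPhiD1Int (a : ℝ) : Continuous (fun t : ℝ => 1 + Real.exp (2 * a * t)) := by
  continuity

lemma hasDerivAt_PhiD1 (a x : ℝ) : HasDerivAt (PhiD1 a) (1 + Real.exp (2 * a * x)) x :=
  ((contPhiD1Int a).integral_hasStrictDerivAt 0 x).hasDerivAt

@[continuity, fun_prop]
lemma continuous_PhiD1 (a : ℝ) : Continuous (PhiD1 a) := by
  rw [continuous_iff_continuousAt]
  exact fun x => (hasDerivAt_PhiD1 a x).continuousAt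

lemma PhiD1_nonneg (a : ℝ) {x : ℝ} (hx : 0 ≤ x) : 0 ≤ PhiD1 a x := by
  apply intervalIntegral.integral_nonneg hx
  intro t _
  positivity

lemma PhiD1_zero (a : ℝ) : PhiD1 a 0 = 0 := intervalIntegral.integral_same

lemma abs_a_mul_PhiD1 (a : ℝ) (ha : a ≤ 0) {n : ℝ} (hn : 0 ≤ n) :
    |a| * PhiD1 a n ≤ n * |a| + 1/2 := by
  rcases eq_or_lt_of_le ha with rfl | ha'
  · simp
  have hexp : ∫ t in (0:ℝ)..n, Real.exp (2 * a * t)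
      = Real.exp (2 * a * n) / (2 * a) - Real.exp (2 * a * 0) / (2 * a) := by
    apply intervalIntegral.integral_eq_sub_of_hasDerivAt
    · intro x _
      have h1 : HasDerivAt (fun t : ℝ => 2 * a * t) (2 * a) x := by
        have := (hasDerivAt_id x).const_mul (2 * a)
        rwa [mul_one] at this
      have h2a : (2:ℝ) * a ≠ 0 := mul_ne_zero two_ne_zero (ne_of_lt ha')
      have := ((Real.hasDerivAt_exp (2 * a * x)).comp x h1).div_const (2 * a)
      rw [mul_div_assoc, div_self h2a, mul_one] at this
      exact this
    · exact ((by continuity : Continuous fun t : ℝ => Real.exp (2 * a * t))).intervalIntegrable 0 n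
  have hsplit : PhiD1 a n = n + (Real.exp (2 * a * n) / (2 * a) - Real.exp (2 * a * 0) / (2 * a)) := by
    rw [PhiD1, intervalIntegral.integral_add (intervalIntegrable_const)
      (((by continuity : Continuous fun t : ℝ => Real.exp (2 * a * t))).intervalIntegrable 0 n), hexp]
    simp
  have habs : |a| = -a := abs_of_neg ha'
  have h1 : Real.exp (2 * a * n) ≤ 1 := by
    rw [Real.exp_le_one_iff]
    nlinarith
  have h2 : 0 < Real.exp (2 * a * n) := Real.exp_pos _
  have hane : a ≠ 0 := ne_of_lt ha'
  rw [hsplit, habs, mul_zero, Real.exp_zero]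
  have e1 : (-a) * (n + (Real.exp (2*a*n)/(2*a) - 1/(2*a)))
      = n * (-a) + (1 - Real.exp (2*a*n))/2 := by
    field_simp
    ring
  rw [e1]
  linarith

set_option maxHeartbeats 2000000 in
theorem D1_bound (a : ℝ) (ha : a ≤ 0) (n : ℝ) (hn : 1 ≤ n)
    (j : ℕ) (hj : 2 ≤ j) :
    |∫ v in (0:ℝ)..n,
        Real.exp (a * v) *
          (∫ t in (0:ℝ)..(n - v), (1 + Real.exp (2 * a * t))) *
          Real.cos (v * (2 * Real.pi * ((j / 2 : ℕ) : ℝ)))|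
      ≤ (3 * n * |a| + 10) / (2 * Real.pi * ((j / 2 : ℕ) : ℝ)) ^ 2 := by
  have hn0 : (0:ℝ) ≤ n := le_trans zero_le_one hn
  set m : ℝ := ((j / 2 : ℕ) : ℝ) with hm_def
  have hm1 : (1:ℝ) ≤ m := by
    have h : 1 ≤ j / 2 := (Nat.one_le_div_iff (by norm_num)).mpr hj
    rw [hm_def]
    exact_mod_cast h
  set γ : ℝ := 2 * Real.pi * m with hγ_def
  have hγpos : 0 < γ := by
    have hm0 : 0 < m := lt_of_lt_of_le one_pos hm1
    have := Real.pi_pos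
    positivity
  have hγne : γ ≠ 0 := ne_of_gt hγpos
  have hγ2 : (0:ℝ) < γ ^ 2 := by positivity
  set F : ℝ → ℝ := fun v => Real.exp (a * v) * PhiD1 a (n - v) with hF_def
  set F' : ℝ → ℝ := fun v =>
    Real.exp (a * v) * (a * PhiD1 a (n - v) - (1 + Real.exp (2 * a * (n - v)))) with hF'_def
  set F2 : ℝ → ℝ := fun v =>
    Real.exp (a * v) * (a ^ 2 * PhiD1 a (n - v) - 2 * a) with hF2_def
  -- basic derivative facts
  have hsub : ∀ v : ℝ, HasDerivAt (fun v : ℝ => n - v) (-1) v := fun v =>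
    (hasDerivAt_id v).const_sub n
  have hexp' : ∀ v : ℝ, HasDerivAt (fun v : ℝ => Real.exp (a * v)) (a * Real.exp (a * v)) v := by
    intro v
    have h1 : HasDerivAt (fun v : ℝ => a * v) a v := by
      have := (hasDerivAt_id v).const_mul a; rwa [mul_one] at this
    have : HasDerivAt (fun v : ℝ => Real.exp (a * v)) _ v := (Real.hasDerivAt_exp (a * v)).comp v h1
    simpa [mul_comm] using this
  have hPhi' : ∀ v : ℝ, HasDerivAt (fun v : ℝ => PhiD1 a (n - v))
      (-(1 + Real.exp (2 * a * (n - v)))) v := by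
    intro v
    have : HasDerivAt (fun v : ℝ => PhiD1 a (n - v)) _ v := (hasDerivAt_PhiD1 a (n - v)).comp v (hsub v)
    simpa using this
  have hE2 : ∀ v : ℝ, HasDerivAt (fun v : ℝ => Real.exp (2 * a * (n - v)))
      (-(2 * a) * Real.exp (2 * a * (n - v))) v := by
    intro v
    have h1 : HasDerivAt (fun v : ℝ => 2 * a * (n - v)) (-(2 * a)) v := by
      have := (hsub v).const_mul (2 * a)
      simpa [mul_comm] using this
    have := (Real.hasDerivAt_exp (2 * a * (n - v))).comp v h1
    have : HasDerivAt (fun v : ℝ => Real.exp (2 * a * (n - v))) _ v := this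
    simpa [mul_comm] using this
  have hFderiv : ∀ v : ℝ, HasDerivAt F (F' v) v := by
    intro v
    have h : HasDerivAt (fun v : ℝ => Real.exp (a * v) * PhiD1 a (n - v)) _ v := (hexp' v).mul (hPhi' v)
    rw [hF_def, hF'_def]
    convert h using 1
    ring
  have hF'deriv : ∀ v : ℝ, HasDerivAt F' (F2 v) v := by
    intro v
    have hP : HasDerivAt (fun v : ℝ => a * PhiD1 a (n - v) - (1 + Real.exp (2 * a * (n - v))))
        (a * (-(1 + Real.exp (2 * a * (n - v)))) - -(2 * a) * Real.exp (2 * a * (n - v))) v :=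
      ((hPhi' v).const_mul a).sub ((hE2 v).const_add 1)
    have h : HasDerivAt (fun v : ℝ => Real.exp (a * v) * (a * PhiD1 a (n - v) - (1 + Real.exp (2 * a * (n - v))))) _ v := (hexp' v).mul hP
    rw [hF'_def, hF2_def]
    convert h using 1
    ring
  -- trig derivatives
  have hlin : ∀ v : ℝ, HasDerivAt (fun v : ℝ => v * γ) γ v := by
    intro v
    have := (hasDerivAt_id v).mul_const γ; rwa [one_mul] at this
  have hS : ∀ v : ℝ, HasDerivAt (fun v : ℝ => Real.sin (v * γ) / γ) (Real.cos (v * γ)) v := by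
    intro v
    have := ((Real.hasDerivAt_sin (v * γ)).comp v (hlin v)).div_const γ
    rwa [mul_div_assoc, div_self hγne, mul_one] at this
  have hC : ∀ v : ℝ, HasDerivAt (fun v : ℝ => (-Real.cos (v * γ)) / γ ^ 2)
      (Real.sin (v * γ) / γ) v := by
    intro v
    have : HasDerivAt (fun v : ℝ => (-Real.cos (v * γ)) / γ ^ 2) _ v := (((Real.hasDerivAt_cos (v * γ)).comp v (hlin v)).neg).div_const (γ ^ 2)
    convert this using 1
    rw [pow_two]
    field_simp
  -- continuity
  have hcontF' : Continuous F' := by rw [hF'_def]; fun_prop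
  have hcontF2 : Continuous F2 := by rw [hF2_def]; fun_prop
  have hcontcos : Continuous fun v : ℝ => Real.cos (v * γ) := by fun_prop
  have hcontS : Continuous fun v : ℝ => Real.sin (v * γ) / γ := by fun_prop
  -- integrations by parts
  have ibp1 : (∫ v in (0:ℝ)..n, F v * Real.cos (v * γ))
      = F n * (Real.sin (n * γ) / γ) - F 0 * (Real.sin (0 * γ) / γ)
        - ∫ v in (0:ℝ)..n, F' v * (Real.sin (v * γ) / γ) :=
    intervalIntegral.integral_mul_deriv_eq_deriv_mul
      (fun x _ => hFderiv x) (fun x _ => hS x)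
      (hcontF'.intervalIntegrable 0 n) (hcontcos.intervalIntegrable 0 n)
  have ibp2 : (∫ v in (0:ℝ)..n, F' v * (Real.sin (v * γ) / γ))
      = F' n * ((-Real.cos (n * γ)) / γ ^ 2) - F' 0 * ((-Real.cos (0 * γ)) / γ ^ 2)
        - ∫ v in (0:ℝ)..n, F2 v * ((-Real.cos (v * γ)) / γ ^ 2) :=
    intervalIntegral.integral_mul_deriv_eq_deriv_mul
      (fun x _ => hF'deriv x) (fun x _ => hC x)
      (hcontF2.intervalIntegrable 0 n) (hcontS.intervalIntegrable 0 n)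
  have hftc : (∫ v in (0:ℝ)..n, F2 v) = F' n - F' 0 :=
    intervalIntegral.integral_eq_sub_of_hasDerivAt (fun x hx => hF'deriv x)
      (hcontF2.intervalIntegrable 0 n)
  -- pointwise bounds
  have hF2nonneg : ∀ x ∈ Set.Icc (0:ℝ) n, 0 ≤ F2 x := by
    intro x hx
    have h1 : 0 ≤ PhiD1 a (n - x) := PhiD1_nonneg a (by linarith [hx.2])
    have h2 : 0 ≤ a ^ 2 * PhiD1 a (n - x) - 2 * a := by nlinarith
    rw [hF2_def]
    exact mul_nonneg (Real.exp_pos _).le h2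
  have hexpan : Real.exp (a * n) ≤ 1 := Real.exp_le_one_iff.mpr (by nlinarith)
  have hF'n : |F' n| ≤ 2 := by
    have h : F' n = Real.exp (a * n) * (-2) := by
      rw [hF'_def]
      simp [sub_self, PhiD1_zero]
      ring
    rw [h, abs_mul, abs_of_pos (Real.exp_pos _)]
    rw [abs_neg, abs_two]
    nlinarith [Real.exp_pos (a * n)]
  have hF'0 : |F' 0| ≤ n * |a| + 5 / 2 := by
    have h : F' 0 = a * PhiD1 a n - (1 + Real.exp (2 * a * n)) := by
      rw [hF'_def]; simp
    have h2 : |a * PhiD1 a n| ≤ n * |a| + 1 / 2 := by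
      rw [abs_mul, abs_of_nonneg (PhiD1_nonneg a hn0)]
      exact abs_a_mul_PhiD1 a ha hn0
    have h3 : |1 + Real.exp (2 * a * n)| ≤ 2 := by
      have he1 : Real.exp (2 * a * n) ≤ 1 := Real.exp_le_one_iff.mpr (by nlinarith)
      have he0 : 0 < Real.exp (2 * a * n) := Real.exp_pos _
      rw [abs_of_pos (by linarith)]
      linarith
    calc |F' 0| ≤ |a * PhiD1 a n| + |1 + Real.exp (2 * a * n)| := by
          rw [h]; exact abs_sub _ _
      _ ≤ n * |a| + 1 / 2 + 2 := by linarith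
      _ = n * |a| + 5 / 2 := by ring
  -- bound on second-derivative integral
  have hbound : |∫ v in (0:ℝ)..n, F2 v * ((-Real.cos (v * γ)) / γ ^ 2)|
      ≤ (F' n - F' 0) / γ ^ 2 := by
    have step1 : |∫ v in (0:ℝ)..n, F2 v * ((-Real.cos (v * γ)) / γ ^ 2)|
        ≤ ∫ v in (0:ℝ)..n, |F2 v * ((-Real.cos (v * γ)) / γ ^ 2)| :=
      intervalIntegral.abs_integral_le_integral_abs hn0
    have step2 : (∫ v in (0:ℝ)..n, |F2 v * ((-Real.cos (v * γ)) / γ ^ 2)|)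
        ≤ ∫ v in (0:ℝ)..n, F2 v * (1 / γ ^ 2) := by
      apply intervalIntegral.integral_mono_on hn0
      · exact ((hcontF2.mul ((hcontcos.neg).div_const _)).abs).intervalIntegrable 0 n
      · exact (hcontF2.mul continuous_const).intervalIntegrable 0 n
      · intro x hx
        rw [abs_mul, abs_of_nonneg (hF2nonneg x hx)]
        apply mul_le_mul_of_nonneg_left _ (hF2nonneg x hx)
        rw [abs_div, abs_neg, abs_of_pos hγ2]
        apply div_le_div_of_nonneg_right ?_ hγ2.le
        exact Real.abs_cos_le_one _
    have step3 : (∫ v in (0:ℝ)..n, F2 v * (1 / γ ^ 2)) = (F' n - F' 0) / γ ^ 2 := by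
      rw [intervalIntegral.integral_mul_const, hftc]
      ring
    calc _ ≤ _ := step1
      _ ≤ _ := step2
      _ = _ := step3
  -- assemble
  show |∫ v in (0:ℝ)..n, F v * Real.cos (v * γ)| ≤ (3 * n * |a| + 10) / γ ^ 2
  rw [ibp1]
  have hFn0 : F n = 0 := by rw [hF_def]; simp [sub_self, PhiD1_zero]
  have hzero : F n * (Real.sin (n * γ) / γ) - F 0 * (Real.sin (0 * γ) / γ) = 0 := by
    rw [hFn0]; simp
  rw [hzero, zero_sub, abs_neg, ibp2]
  have hA : |F' n * ((-Real.cos (n * γ)) / γ ^ 2)| ≤ 2 / γ ^ 2 := by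
    rw [abs_mul, abs_div, abs_neg, abs_of_pos hγ2]
    calc |F' n| * (|Real.cos (n * γ)| / γ ^ 2) ≤ 2 * (1 / γ ^ 2) := by
          apply mul_le_mul hF'n _ (by positivity) (by norm_num)
          exact div_le_div_of_nonneg_right (Real.abs_cos_le_one _) hγ2.le
      _ = 2 / γ ^ 2 := by ring
  have hB : |F' 0 * ((-Real.cos (0 * γ)) / γ ^ 2)| ≤ (n * |a| + 5 / 2) / γ ^ 2 := by
    rw [zero_mul, Real.cos_zero, abs_mul, abs_div, abs_neg, abs_one, abs_of_pos hγ2]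
    calc |F' 0| * (1 / γ ^ 2) ≤ (n * |a| + 5 / 2) * (1 / γ ^ 2) :=
          mul_le_mul_of_nonneg_right hF'0 (by positivity)
      _ = (n * |a| + 5 / 2) / γ ^ 2 := by ring
  have hCb : |∫ v in (0:ℝ)..n, F2 v * ((-Real.cos (v * γ)) / γ ^ 2)|
      ≤ (2 + (n * |a| + 5 / 2)) / γ ^ 2 := by
    refine hbound.trans ?_
    apply div_le_div_of_nonneg_right ?_ hγ2.le
    have := abs_le.mp hF'n
    have := abs_le.mp hF'0
    linarith
  have htri : ∀ x y z : ℝ, |x - y - z| ≤ |x| + |y| + |z| := by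
    intro x y z
    calc |x - y - z| ≤ |x - y| + |z| := abs_sub _ _
      _ ≤ |x| + |y| + |z| := by have := abs_sub x y; linarith
  calc |F' n * ((-Real.cos (n * γ)) / γ ^ 2) - F' 0 * ((-Real.cos (0 * γ)) / γ ^ 2)
        - ∫ v in (0:ℝ)..n, F2 v * ((-Real.cos (v * γ)) / γ ^ 2)|
      ≤ |F' n * ((-Real.cos (n * γ)) / γ ^ 2)| + |F' 0 * ((-Real.cos (0 * γ)) / γ ^ 2)|
        + |∫ v in (0:ℝ)..n, F2 v * ((-Real.cos (v * γ)) / γ ^ 2)| := htri _ _ _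
    _ ≤ 2 / γ ^ 2 + (n * |a| + 5 / 2) / γ ^ 2 + (2 + (n * |a| + 5 / 2)) / γ ^ 2 := by
        linarith [hA, hB, hCb]
    _ = (2 * (n * |a|) + 9) / γ ^ 2 := by ring
    _ ≤ (3 * n * |a| + 10) / γ ^ 2 := by
        apply div_le_div_of_nonneg_right ?_ hγ2.le
        have h0 : 0 ≤ n * |a| := mul_nonneg hn0 (abs_nonneg a)
        nlinarith
end
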